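/- The fusion algebra for generalized Weyl modules over affine sl₂ at generic level, with product (V_{r₁}^α, V_{s₁}) ∘ (V_{r₂}^β, V_{s₂}) = Σ_{j=|r₁−r₂|}^{r₁+r₂} (V_j^{α+β+r₁+r₂−j}, V_{s₁} ⊗ V_{s₂}), is isomorphic as a ring to the tensor product of the Grothendieck ring of finite-dimensional osp(1|2)-modules with the Grothendieck ring of finite-dimensional sl₂-modules. -/

import Mathlib

open TensorProduct

/-- Clebsch–Gordan product of basis classes in the Grothendieck ring of
finite-dimensional `sl₂`-modules. -/
noncomputable def slMulB (r s : ℕ) : ℕ →₀ ℤ :=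
  ∑ j ∈ Finset.Icc ((r - s) ⊔ (s - r)) (r + s),
    if (r + s + j) % 2 = 0 then Finsupp.single j 1 else 0

/-- Product of basis classes in the Grothendieck ring of finite-dimensional
`osp(1|2)`-modules. -/
noncomputable def ospMulB (a b : ℕ × ZMod 2) : (ℕ × ZMod 2) →₀ ℤ :=
  ∑ j ∈ Finset.Icc ((a.1 - b.1) ⊔ (b.1 - a.1)) (a.1 + b.1),
    Finsupp.single (j, a.2 + b.2 + ((a.1 + b.1 - j : ℕ) : ZMod 2)) 1

/-- Product of basis symbols `(V r ^ ε, V s)` in the generic-level fusion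
algebra of generalized Weyl modules over affine `sl₂`:
`(V_{r₁}^α, V_{s₁}) ∘ (V_{r₂}^β, V_{s₂}) =
  Σ_{j=|r₁-r₂|}^{r₁+r₂} (V_j^{α+β+r₁+r₂-j}, V_{s₁} ⊗ V_{s₂})`. -/
noncomputable def fusMulB (a b : (ℕ × ZMod 2) × ℕ) : ((ℕ × ZMod 2) × ℕ) →₀ ℤ :=
  ∑ j ∈ Finset.Icc ((a.1.1 - b.1.1) ⊔ (b.1.1 - a.1.1)) (a.1.1 + b.1.1),
    ∑ l ∈ Finset.Icc ((a.2 - b.2) ⊔ (b.2 - a.2)) (a.2 + b.2),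
      if (a.2 + b.2 + l) % 2 = 0 then
        Finsupp.single ((j, a.1.2 + b.1.2 + ((a.1.1 + b.1.1 - j : ℕ) : ZMod 2)), l) 1
      else 0

/-- Bilinear extension of a basis product to the free ℤ-module. -/
noncomputable def liftMul {α : Type} (B : α → α → (α →₀ ℤ)) (x y : α →₀ ℤ) : α →₀ ℤ :=
  x.sum fun a m => y.sum fun b n => (m * n) • B a b

/-- Bilinear (curried) form of a basis product. -/
noncomputable def liftMulL {α : Type} (B : α → α → (α →₀ ℤ)) :
    (α →₀ ℤ) →ₗ[ℤ] (α →₀ ℤ) →ₗ[ℤ] (α →₀ ℤ) :=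
  Finsupp.lsum ℤ fun a => LinearMap.toSpanSingleton ℤ ((α →₀ ℤ) →ₗ[ℤ] (α →₀ ℤ))
    (Finsupp.lsum ℤ fun b => LinearMap.toSpanSingleton ℤ (α →₀ ℤ) (B a b))

/-- The induced multiplication on the tensor product of the two Grothendieck
rings: `(x₁ ⊗ y₁) · (x₂ ⊗ y₂) = (x₁x₂) ⊗ (y₁y₂)`. -/
noncomputable def mulT :
    (((ℕ × ZMod 2) →₀ ℤ) ⊗[ℤ] (ℕ →₀ ℤ)) →ₗ[ℤ]
      (((ℕ × ZMod 2) →₀ ℤ) ⊗[ℤ] (ℕ →₀ ℤ)) →ₗ[ℤ]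
      (((ℕ × ZMod 2) →₀ ℤ) ⊗[ℤ] (ℕ →₀ ℤ)) :=
  TensorProduct.lift
    (((TensorProduct.mapBilinear (RingHom.id ℤ) ((ℕ × ZMod 2) →₀ ℤ) (ℕ →₀ ℤ)
          ((ℕ × ZMod 2) →₀ ℤ) (ℕ →₀ ℤ)).comp
        (liftMulL ospMulB)).compl₂ (liftMulL slMulB))
section Aux

lemma liftMulL_single_one {α : Type} (B : α → α → (α →₀ ℤ)) (a b : α) :
    liftMulL B (Finsupp.single a 1) (Finsupp.single b 1) = B a b := by
  simp [liftMulL]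

lemma liftMul_eq {α : Type} (B : α → α → (α →₀ ℤ)) (x y : α →₀ ℤ) :
    liftMul B x y = liftMulL B x y := by
  rw [liftMul, liftMulL, Finsupp.lsum_apply, LinearMap.finsupp_sum_apply]
  refine Finsupp.sum_congr fun a _ => ?_
  rw [LinearMap.toSpanSingleton_apply, LinearMap.smul_apply, Finsupp.lsum_apply,
    Finsupp.smul_sum]
  refine Finsupp.sum_congr fun b _ => ?_
  rw [LinearMap.toSpanSingleton_apply, smul_smul]

private noncomputable def eT := finsuppTensorFinsupp' ℤ (ℕ × ZMod 2) ℕ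

lemma mulT_tmul_single (p r : ℕ × ZMod 2) (q s : ℕ) :
    mulT (Finsupp.single p 1 ⊗ₜ[ℤ] Finsupp.single q 1)
        (Finsupp.single r 1 ⊗ₜ[ℤ] Finsupp.single s 1)
      = ospMulB p r ⊗ₜ[ℤ] slMulB q s := by
  rw [mulT]
  erw [TensorProduct.lift.tmul]
  simp only [LinearMap.compl₂_apply, LinearMap.comp_apply,
    TensorProduct.mapBilinear_apply, TensorProduct.map_tmul, liftMulL_single_one]
  rfl

lemma eT_symm_single_one (a : (ℕ × ZMod 2) × ℕ) :
    eT.symm (Finsupp.single a 1) =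
      Finsupp.single a.1 1 ⊗ₜ[ℤ] Finsupp.single a.2 1 := by
  simp only [eT]
  simpa using finsuppTensorFinsupp'_symm_single_mul ℤ (ℕ × ZMod 2) ℕ a 1 1

lemma key (a b : (ℕ × ZMod 2) × ℕ) :
    fusMulB a b = eT (ospMulB a.1 b.1 ⊗ₜ[ℤ] slMulB a.2 b.2) := by
  simp only [eT]
  rw [ospMulB, slMulB, TensorProduct.sum_tmul, map_sum, fusMulB]
  refine Finset.sum_congr rfl fun j _ => ?_
  rw [TensorProduct.tmul_sum, map_sum]
  refine Finset.sum_congr rfl fun l _ => ?_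
  split_ifs with h
  · rw [finsuppTensorFinsupp'_single_tmul_single, mul_one]
  · rw [TensorProduct.tmul_zero, map_zero]

theorem stmt7 :
    ∃ f : (((ℕ × ZMod 2) × ℕ) →₀ ℤ) ≃ₗ[ℤ] ((ℕ × ZMod 2) →₀ ℤ) ⊗[ℤ] (ℕ →₀ ℤ),
      f (Finsupp.single ((0, (0 : ZMod 2)), 0) 1)
        = Finsupp.single (0, (0 : ZMod 2)) 1 ⊗ₜ[ℤ] Finsupp.single 0 1 ∧
      ∀ x y : ((ℕ × ZMod 2) × ℕ) →₀ ℤ,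
        f (liftMul fusMulB x y) = mulT (f x) (f y) := by
  refine ⟨eT.symm, ?_, ?_⟩
  · exact eT_symm_single_one ((0, 0), 0)
  · have hbil : ∀ a b : (ℕ × ZMod 2) × ℕ,
        eT.symm (liftMulL fusMulB (Finsupp.single a 1) (Finsupp.single b 1))
          = mulT (eT.symm (Finsupp.single a 1)) (eT.symm (Finsupp.single b 1)) := by
      intro a b
      rw [eT_symm_single_one, eT_symm_single_one, liftMulL_single_one,
        mulT_tmul_single, key, LinearEquiv.symm_apply_apply]
    have hL : ∀ x y : ((ℕ × ZMod 2) × ℕ) →₀ ℤ,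
        eT.symm (liftMulL fusMulB x y) = mulT (eT.symm x) (eT.symm y) := by
      intro x y
      induction x using Finsupp.induction_linear with
      | zero => simp
      | add u v hu hv => simp [map_add, hu, hv]
      | single a m =>
        induction y using Finsupp.induction_linear with
        | zero => simp
        | add u v hu hv => simp [map_add, hu, hv]
        | single b n =>
          have h1 : Finsupp.single a m = m • Finsupp.single a (1 : ℤ) := by simp
          have h2 : Finsupp.single b n = n • Finsupp.single b (1 : ℤ) := by simp
          rw [h1, h2]
          rw [LinearEquiv.map_smul, LinearEquiv.map_smul]
          simp only [map_smul, LinearMap.map_smul, LinearMap.smul_apply]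
          rw [LinearEquiv.map_smul, LinearEquiv.map_smul]
          rw [hbil]
          exact smul_comm n m _
    intro x y
    rw [liftMul_eq]
    exact hL x y

end Aux
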